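/- Given a comonad G on a monoidal category C such that the comonad functor is lax monoidal and the counit and comultiplication are monoidal natural transformations (i.e. G is a monoidal comonad), the Eilenberg–Moore category of G-coalgebras carries a monoidal structure such that the forgetful functor to C is strong monoidal. -/

import Mathlib

open CategoryTheory MonoidalCategory Functor.LaxMonoidal

namespace Stmt7Aux

variable {C : Type*} [Category C] [MonoidalCategory C] (G : Comonad C)
    [G.toFunctor.LaxMonoidal]
    [NatTrans.IsMonoidal G.ε] [NatTrans.IsMonoidal G.δ]

/-- The tensor product of two coalgebras. -/
@[simps, reducible]
def tensorObj (A B : G.Coalgebra) : G.Coalgebra where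
  A := A.A ⊗ B.A
  a := (A.a ⊗ₘ B.a) ≫ μ G.toFunctor A.A B.A
  counit := by
    have h := NatTrans.IsMonoidal.tensor (τ := G.ε) A.A B.A
    rw [Category.assoc, h]
    simp only [id_μ, Functor.id_obj, Category.comp_id, tensorHom_comp_tensorHom,
      Comonad.Coalgebra.counit, id_tensorHom_id]
  coassoc := by
    have h := NatTrans.IsMonoidal.tensor (τ := G.δ) A.A B.A
    rw [Category.assoc, h, comp_μ]
    rw [← Category.assoc, tensorHom_comp_tensorHom, A.coassoc, B.coassoc, ← tensorHom_comp_tensorHom]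
    simp only [Category.assoc, Functor.map_comp, Functor.comp_obj]
    rw [μ_natural_assoc]

/-- The unit coalgebra. -/
@[simps, reducible]
def unitObj : G.Coalgebra where
  A := 𝟙_ C
  a := ε G.toFunctor
  counit := NatTrans.IsMonoidal.unit (τ := G.ε)
  coassoc := by
    have h := NatTrans.IsMonoidal.unit (τ := G.δ)
    rw [h, comp_ε]

instance : MonoidalCategoryStruct G.Coalgebra where
  tensorObj := tensorObj G
  tensorUnit := unitObj G
  whiskerLeft A B B' f :=
    { f := A.A ◁ f.f
      h := by
        dsimp
        rw [← MonoidalCategory.id_tensorHom, Category.assoc, ← μ_natural,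
          G.toFunctor.map_id, tensorHom_comp_tensorHom_assoc, tensorHom_comp_tensorHom_assoc,
          Category.comp_id, Category.id_comp, f.h] }
  whiskerRight f B :=
    { f := f.f ▷ B.A
      h := by
        dsimp
        rw [← MonoidalCategory.tensorHom_id, Category.assoc, ← μ_natural,
          G.toFunctor.map_id, tensorHom_comp_tensorHom_assoc, tensorHom_comp_tensorHom_assoc,
          Category.comp_id, Category.id_comp, f.h] }
  tensorHom f g :=
    { f := f.f ⊗ₘ g.f
      h := by
        dsimp
        rw [Category.assoc, ← μ_natural, ← Category.assoc, tensorHom_comp_tensorHom,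
          ← Category.assoc, tensorHom_comp_tensorHom, f.h, g.h] }
  associator A B D := Comonad.Coalgebra.isoMk (α_ A.A B.A D.A) (by
    dsimp
    rw [Category.assoc]
    calc (((A.a ⊗ₘ B.a) ≫ μ G.toFunctor A.A B.A) ⊗ₘ D.a) ≫ μ G.toFunctor (A.A ⊗ B.A) D.A ≫
          G.map (α_ A.A B.A D.A).hom
        = ((A.a ⊗ₘ B.a) ⊗ₘ D.a) ≫ μ G.toFunctor A.A B.A ▷ G.obj D.A ≫
            μ G.toFunctor (A.A ⊗ B.A) D.A ≫ G.map (α_ A.A B.A D.A).hom := by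
          conv_lhs => rw [← Category.comp_id D.a]
          rw [← tensorHom_comp_tensorHom, MonoidalCategory.tensorHom_id, Category.assoc]
      _ = ((A.a ⊗ₘ B.a) ⊗ₘ D.a) ≫ (α_ _ _ _).hom ≫ G.obj A.A ◁ μ G.toFunctor B.A D.A ≫
            μ G.toFunctor A.A (B.A ⊗ D.A) := by rw [associativity]
      _ = (α_ A.A B.A D.A).hom ≫ (A.a ⊗ₘ B.a ⊗ₘ D.a) ≫ G.obj A.A ◁ μ G.toFunctor B.A D.A ≫
            μ G.toFunctor A.A (B.A ⊗ D.A) := by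
          rw [← associator_naturality_assoc]
      _ = (α_ A.A B.A D.A).hom ≫ (A.a ⊗ₘ (B.a ⊗ₘ D.a) ≫ μ G.toFunctor B.A D.A) ≫
            μ G.toFunctor A.A (B.A ⊗ D.A) := by
          rw [← MonoidalCategory.id_tensorHom, tensorHom_comp_tensorHom_assoc, Category.comp_id])
  leftUnitor A := Comonad.Coalgebra.isoMk (λ_ A.A) (by
    dsimp
    rw [Category.assoc, tensorHom_def', Category.assoc, ← left_unitality]
    simp)
  rightUnitor A := Comonad.Coalgebra.isoMk (ρ_ A.A) (by
    dsimp
    rw [Category.assoc, MonoidalCategory.tensorHom_def, Category.assoc, ← right_unitality]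
    simp)

/-- The induced data along the forgetful functor. -/
def inducingData : Monoidal.InducingFunctorData (Comonad.forget G) where
  μIso X Y := Iso.refl _
  εIso := Iso.refl _
  whiskerLeft_eq X Y₁ Y₂ f :=
    ((Category.id_comp _).trans (Category.comp_id _)).symm
  whiskerRight_eq f Y :=
    ((Category.id_comp _).trans (Category.comp_id _)).symm
  tensorHom_eq f g :=
    ((Category.id_comp _).trans (Category.comp_id _)).symm
  associator_eq X Y Z := by
    show (α_ X.A Y.A Z.A).hom =
      (𝟙 ((X.A ⊗ Y.A) ⊗ Z.A) ≫ (𝟙 (X.A ⊗ Y.A) ⊗ₘ 𝟙 Z.A)) ≫ (α_ X.A Y.A Z.A).hom ≫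
        (𝟙 X.A ⊗ₘ 𝟙 (Y.A ⊗ Z.A)) ≫ 𝟙 (X.A ⊗ (Y.A ⊗ Z.A))
    simp
  leftUnitor_eq X := by
    show (λ_ X.A).hom = (𝟙 (𝟙_ C ⊗ X.A) ≫ (𝟙 (𝟙_ C) ⊗ₘ 𝟙 X.A)) ≫ (λ_ X.A).hom
    simp
  rightUnitor_eq X := by
    show (ρ_ X.A).hom = (𝟙 (X.A ⊗ 𝟙_ C) ≫ (𝟙 X.A ⊗ₘ 𝟙 (𝟙_ C))) ≫ (ρ_ X.A).hom
    simp

noncomputable def monoidal : MonoidalCategory G.Coalgebra :=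
  Monoidal.induced (Comonad.forget G) (inducingData G)

end Stmt7Aux

/-- Given a monoidal comonad `G` on a monoidal category `C` (a comonad whose
underlying endofunctor is lax monoidal and whose counit and comultiplication are monoidal
natural transformations), the Eilenberg–Moore category of `G`-coalgebras carries a
monoidal structure such that the forgetful functor to `C` is strong monoidal. -/
theorem stmt_7 {C : Type*} [Category C] [MonoidalCategory C] (G : Comonad C)
    [G.toFunctor.LaxMonoidal]
    [NatTrans.IsMonoidal G.ε] [NatTrans.IsMonoidal G.δ] :
    ∃ M : MonoidalCategory G.Coalgebra,
      Nonempty (@Functor.Monoidal G.Coalgebra _ M C _ _ G.forget) := by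
  exact ⟨Stmt7Aux.monoidal G,
    ⟨Monoidal.fromInducedMonoidal (Comonad.forget G) (Stmt7Aux.inducingData G)⟩⟩
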